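/- Suppose in an odd pizza the cut C is a best answer to a piece p (i.e. C minimizes the total size of R(C') over all cuts C' with p ∈ R(C')). If I is a cyclic interval with an even number of pieces, one of whose ends is the cut C, and p ∉ I, then the total size of the G(C)-pieces in I is at least the total size of the R(C)-pieces in I. -/
import Mathlib


/-- Total size of the red pieces `R(C)` of the almost alternating coloring
induced by the cut `C`: piece `i` is red iff `(i - C).val` is even. -/
noncomputable def redSize (n : ℕ) [NeZero n] (s : ZMod n → ℝ) (C : ZMod n) : ℝ :=
  ∑ i : ZMod n, if Even ((i - C).val) then s i else 0


private lemma castval {n : ℕ} [NeZero n] (a : ZMod n) : ((a.val : ℕ) : ZMod n) = a := by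
  rw [ZMod.natCast_val, ZMod.cast_id]

/-- membership in forward interval -/
private lemma mem_fwd {n : ℕ} [NeZero n] (B : ZMod n) {m : ℕ} (hmn : m < n) (i : ZMod n) :
    i ∈ (Finset.range m).image (fun j : ℕ => B + (j : ZMod n)) ↔ (i - B).val < m := by
  simp only [Finset.mem_image, Finset.mem_range]
  constructor
  · rintro ⟨j, hj, rfl⟩
    have : (B + (j : ZMod n) - B) = (j : ZMod n) := by ring
    rw [this, ZMod.val_cast_of_lt (by omega)]
    exact hj
  · intro h
    exact ⟨(i - B).val, h, by rw [castval]; ring⟩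

/-- parity outside the interval -/
private lemma par_out {n : ℕ} [NeZero n] {B : ZMod n} {m : ℕ} (hm : Even m) (hmn : m < n)
    {i : ZMod n} (hk : m ≤ (i - B).val) :
    (Even ((i - (B + (m : ZMod n))).val) ↔ Even ((i - B).val)) := by
  have hkn : (i - B).val < n := ZMod.val_lt _
  have h1 : i - (B + (m : ZMod n)) = (((i - B).val - m : ℕ) : ZMod n) := by
    rw [Nat.cast_sub hk, castval]; ring
  rw [h1, ZMod.val_cast_of_lt (by omega)]
  obtain ⟨t, rfl⟩ := hm
  rw [Nat.even_iff, Nat.even_iff]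
  omega

/-- parity flips inside the interval -/
private lemma par_in {n : ℕ} [NeZero n] (hn : Odd n) {B : ZMod n} {m : ℕ} (hm : Even m)
    (hmn : m < n) {i : ZMod n} (hk : (i - B).val < m) :
    (Even ((i - (B + (m : ZMod n))).val) ↔ ¬ Even ((i - B).val)) := by
  have hkn : (i - B).val < n := ZMod.val_lt _
  have h1 : i - (B + (m : ZMod n)) = (((i - B).val + (n - m) : ℕ) : ZMod n) := by
    push_cast [Nat.cast_sub hmn.le, castval, ZMod.natCast_self]
    ring
  rw [h1, ZMod.val_cast_of_lt (by omega)]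
  obtain ⟨t, rfl⟩ := hm
  obtain ⟨u, hu⟩ := hn
  rw [Nat.even_iff, Nat.even_iff]
  omega

/-- the sum-splitting argument -/
private lemma aux_sum {n : ℕ} [NeZero n] (s : ZMod n → ℝ) (C C' : ZMod n) (I : Finset (ZMod n))
    (hout : ∀ i ∉ I, (Even ((i - C').val) ↔ Even ((i - C).val)))
    (hin : ∀ i ∈ I, (Even ((i - C').val) ↔ ¬ Even ((i - C).val)))
    (hle : redSize n s C ≤ redSize n s C') :
    (∑ i ∈ I, if Even ((i - C).val) then s i else 0) ≤
      ∑ i ∈ I, if Even ((i - C).val) then 0 else s i := by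
  have h1 : redSize n s C = (∑ i ∈ I, if Even ((i - C).val) then s i else 0) +
      ∑ i ∈ Iᶜ, if Even ((i - C).val) then s i else 0 :=
    (Finset.sum_add_sum_compl I _).symm
  have h2 : redSize n s C' = (∑ i ∈ I, if Even ((i - C).val) then 0 else s i) +
      ∑ i ∈ Iᶜ, if Even ((i - C).val) then s i else 0 := by
    rw [redSize, ← Finset.sum_add_sum_compl I]
    congr 1
    · refine Finset.sum_congr rfl fun i hi => ?_
      rw [if_congr (hin i hi) rfl rfl, ite_not]
    · refine Finset.sum_congr rfl fun i hi => ?_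
      rw [if_congr (hout i (Finset.mem_compl.mp hi)) rfl rfl]
  linarith [h1 ▸ h2 ▸ hle]

/-- If the cut `C` is a best answer to the piece `p` (it minimizes `‖R(·)‖`
among cuts whose red class contains `p`), and `I` is an even cyclic interval
ending at `C` (on either side) with `p ∉ I`, then the green size of `I` is at
least its red size. -/
theorem stmt8 (n : ℕ) [NeZero n] (hn : Odd n) (s : ZMod n → ℝ) (hs : ∀ i, 0 ≤ s i)
    (p C : ZMod n) (hp : Even ((p - C).val))
    (hbest : ∀ C' : ZMod n, Even ((p - C').val) → redSize n s C ≤ redSize n s C')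
    (m : ℕ) (hm : Even m) (I : Finset (ZMod n))
    (hI : I = (Finset.range m).image (fun j : ℕ => C + (j : ZMod n)) ∨
          I = (Finset.range m).image (fun j : ℕ => C - 1 - (j : ZMod n)))
    (hpI : p ∉ I) :
    (∑ i ∈ I, if Even ((i - C).val) then s i else 0) ≤
      ∑ i ∈ I, if Even ((i - C).val) then 0 else s i := by
  -- first, m < n, else p ∈ I
  rcases lt_or_ge m n with hmn | hmn
  · -- backward interval rewritten as forward interval from C - m
    have hback : (Finset.range m).image (fun j : ℕ => C - 1 - (j : ZMod n)) =
        (Finset.range m).image (fun j : ℕ => (C - (m : ZMod n)) + (j : ZMod n)) := by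
      apply Finset.ext
      intro i
      simp only [Finset.mem_image, Finset.mem_range]
      constructor
      · rintro ⟨j, hj, rfl⟩
        refine ⟨m - 1 - j, by omega, ?_⟩
        have : ((m - 1 - j : ℕ) : ZMod n) = (m : ZMod n) - 1 - j := by
          push_cast [Nat.cast_sub (by omega : j ≤ m - 1), Nat.cast_sub (by omega : 1 ≤ m)]
          ring
        rw [this]; ring
      · rintro ⟨j, hj, rfl⟩
        refine ⟨m - 1 - j, by omega, ?_⟩
        have : ((m - 1 - j : ℕ) : ZMod n) = (m : ZMod n) - 1 - j := by
          push_cast [Nat.cast_sub (by omega : j ≤ m - 1), Nat.cast_sub (by omega : 1 ≤ m)]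
          ring
        rw [this]; ring
    rcases hI with rfl | rfl
    · -- forward: C' = C + m
      refine aux_sum s C (C + (m : ZMod n)) _ (fun i hi => par_out hm hmn ?_)
        (fun i hi => par_in hn hm hmn ?_) (hbest _ ?_)
      · rw [mem_fwd C hmn] at hi; omega
      · rwa [mem_fwd C hmn] at hi
      · rw [(par_out hm hmn (by rw [mem_fwd C hmn] at hpI; omega) :
          Even ((p - (C + (m : ZMod n))).val) ↔ _)]
        exact hp
    · rw [hback]
      rw [hback] at hpI
      -- here the coloring cut C = (C - m) + m; take C' = C - m
      set B := C - (m : ZMod n) with hB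
      have hBm : B + (m : ZMod n) = C := by rw [hB]; ring
      have hpmem : m ≤ (p - B).val := by
        rw [mem_fwd B hmn] at hpI; omega
      refine aux_sum s C B _ (fun i hi => ?_) (fun i hi => ?_) (hbest _ ?_)
      · rw [mem_fwd B hmn] at hi
        rw [← hBm]
        exact (par_out hm hmn (by omega)).symm
      · rw [mem_fwd B hmn] at hi
        rw [← hBm]
        have := par_in hn hm hmn (B := B) hi
        tauto
      · have := par_out hm hmn (B := B) (i := p) hpmem
        rw [hBm] at this
        exact this.mp hp
  · -- m ≥ n : p ∈ I, contradiction
    exfalso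
    apply hpI
    rcases hI with rfl | rfl
    · simp only [Finset.mem_image, Finset.mem_range]
      exact ⟨(p - C).val, lt_of_lt_of_le (ZMod.val_lt _) hmn, by rw [castval]; ring⟩
    · simp only [Finset.mem_image, Finset.mem_range]
      exact ⟨(C - 1 - p).val, lt_of_lt_of_le (ZMod.val_lt _) hmn, by rw [castval]; ring⟩
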